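/- Equivalently stated as a pure identity of compositions: for any compositions I, K with K ⪰ I, (-1)^{ℓ(K)} ∑_{K ⪰ J ⪰ I} (-1)^{ℓ(J)} fp(J,I)/π_u(K,J) = (-1)^{ℓ(I)} ∑_{K̄ ⪰ J ⪰ Ī} (-1)^{ℓ(J)} fp(J,Ī)/π_u(K̄,J), where sums run over intermediate refinements J. -/

import Mathlib

/-- `π_u(I) = ∏_{j=1}^{k} (i_1 + ... + i_j)` for a composition given as a list. -/
def piu (l : List ℕ) : ℕ :=
  ((List.range l.length).map fun j => (l.take (j + 1)).sum).prod

/-- The sum `∑_{K ⪰ J ⪰ I} (-1)^{ℓ(J)} fp(J,I)/π_u(K,J)`, where the refinement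
`K ⪰ I` is encoded by its block decomposition `L` (so `K = L.flatten` and
`I = L.map sum`), and the intermediate `J` are indexed by choices of a composition of
the length of each block of `L`. -/
noncomputable def midSum (L : List (List ℕ)) : ℚ :=
  ∑ g : (a : Fin L.length) → Composition (L.get a).length,
    ((-1 : ℚ) ^ (∑ a, (g a).length)) *
      (∏ a, ((((L.get a).splitWrtComposition (g a)).map List.sum).headI : ℚ)) /
      (∏ a, ((((L.get a).splitWrtComposition (g a)).map piu).prod : ℚ))

/-! ### Auxiliary definitions and lemmas -/

/-- `piuo u l = ∏_j (u + i₁ + ⋯ + i_j)`, an offset version of `piu` valued in `ℚ`. -/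
def piuo : ℚ → List ℕ → ℚ
  | _, [] => 1
  | u, x :: l => (u + x) * piuo (u + x) l

@[simp] lemma piuo_nil (u : ℚ) : piuo u [] = 1 := rfl

lemma piuo_cons (u : ℚ) (x : ℕ) (l : List ℕ) : piuo u (x :: l) = (u + x) * piuo (u + x) l := rfl

lemma piuo_pos {u : ℚ} (hu : 0 ≤ u) {l : List ℕ} (hl : ∀ x ∈ l, 0 < x) : 0 < piuo u l := by
  induction l generalizing u with
  | nil => norm_num
  | cons x xs ih =>
    have hx : 0 < x := hl x (by simp)
    have h1 : (0:ℚ) < u + x := by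
      have : (1:ℚ) ≤ (x:ℚ) := by exact_mod_cast hx
      linarith
    exact mul_pos h1 (ih h1.le (fun y hy => hl y (by simp [hy])))

lemma piuo_concat (u : ℚ) (l : List ℕ) (x : ℕ) :
    piuo u (l ++ [x]) = piuo u l * (u + l.sum + x) := by
  induction l generalizing u with
  | nil => simp [piuo_cons]
  | cons y ys ih =>
    simp only [List.cons_append, piuo_cons, ih, List.sum_cons]
    push_cast
    ring

lemma piuo_eq_prod (u : ℚ) (l : List ℕ) :
    piuo u l = ((List.range l.length).map fun j => u + ((l.take (j + 1)).sum : ℚ)).prod := by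
  induction l generalizing u with
  | nil => simp
  | cons x xs ih =>
    rw [piuo_cons, ih]
    rw [List.length_cons, List.range_succ_eq_map, List.map_cons, List.map_map, List.prod_cons]
    congr 1
    rw [List.map_congr_left]
    intro j hj; simp [Function.comp, add_assoc]

lemma piu_cast (l : List ℕ) : ((piu l : ℕ) : ℚ) = piuo 0 l := by
  rw [piuo_eq_prod, piu, Nat.cast_list_prod, List.map_map]
  congr 1
  apply List.map_congr_left
  intro j hj
  simp [Function.comp, Nat.add_comm 1 j, Nat.cast_list_sum]

lemma neg_one_pow_sub {j m : ℕ} (h : j ≤ m) : ((-1:ℚ))^(m-j) = (-1)^m * (-1)^j := by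
  have h1 : ((-1:ℚ))^(m-j) * ((-1:ℚ))^j = (-1)^m := by
    rw [← pow_add]; congr 1; omega
  have h2 : ((-1:ℚ))^j * ((-1:ℚ))^j = 1 := by
    rw [← pow_add, ← two_mul, pow_mul]; norm_num
  calc ((-1:ℚ))^(m-j) = ((-1:ℚ))^(m-j) * (((-1:ℚ))^j * ((-1:ℚ))^j) := by rw [h2, mul_one]
  _ = (((-1:ℚ))^(m-j) * ((-1:ℚ))^j) * ((-1:ℚ))^j := by ring
  _ = (-1)^m * (-1)^j := by rw [h1]

/-! ### Splitting a sum over compositions according to the first block -/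

def compCons (l : List ℕ) (p : Σ j : Fin l.length, Composition (l.drop ((j:ℕ)+1)).length) :
    Composition l.length :=
  ⟨((p.1 : ℕ) + 1) :: p.2.blocks,
   by
     intro i hi
     rcases List.mem_cons.1 hi with h | h
     · omega
     · exact p.2.blocks_pos h,
   by
     have := p.1.isLt
     have := p.2.blocks_sum
     simp only [List.sum_cons, List.length_drop] at *
     omega⟩

lemma compCons_bijective (l : List ℕ) (hl : l ≠ []) : Function.Bijective (compCons l) := by
  constructor
  · rintro ⟨j, d⟩ ⟨j', d'⟩ h
    have hb := congrArg Composition.blocks h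
    simp only [compCons, List.cons.injEq] at hb
    obtain ⟨h1, h2⟩ := hb
    have hj : j = j' := Fin.ext (by omega)
    subst hj
    obtain rfl : d = d' := Composition.ext h2
    rfl
  · intro c
    have hne : c.blocks ≠ [] := by
      intro h
      have := c.blocks_sum
      rw [h] at this
      simp at this
      exact hl (List.length_eq_zero_iff.1 this.symm)
    rcases hcb : c.blocks with _ | ⟨b, t⟩
    · exact absurd hcb hne
    have hbpos : 0 < b := c.blocks_pos (by rw [hcb]; simp)
    have hsum : b + t.sum = l.length := by
      have := c.blocks_sum
      rw [hcb] at this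
      simpa using this
    have hble : b ≤ l.length := by omega
    refine ⟨⟨⟨b - 1, by omega⟩,
      ⟨t, fun h => c.blocks_pos (by rw [hcb]; exact List.mem_cons_of_mem _ h), ?_⟩⟩, ?_⟩
    · simp only [List.length_drop]
      omega
    · apply Composition.ext
      simp only [compCons, hcb]
      congr 1
      omega

lemma sum_comp_split (l : List ℕ) (hl : l ≠ []) (F : List (List ℕ) → ℚ) :
    ∑ c : Composition l.length, F (l.splitWrtComposition c)
      = ∑ j : Fin l.length, ∑ d : Composition (l.drop ((j:ℕ)+1)).length,
          F (l.take ((j:ℕ)+1) :: (l.drop ((j:ℕ)+1)).splitWrtComposition d) := by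
  have h1 : ∑ p : (Σ j : Fin l.length, Composition (l.drop ((j:ℕ)+1)).length),
      F (l.take ((p.1:ℕ)+1) :: (l.drop ((p.1:ℕ)+1)).splitWrtComposition p.2)
      = ∑ j : Fin l.length, ∑ d : Composition (l.drop ((j:ℕ)+1)).length,
          F (l.take ((j:ℕ)+1) :: (l.drop ((j:ℕ)+1)).splitWrtComposition d) := by
    rw [← Finset.univ_sigma_univ]
    exact Finset.sum_sigma _ _ _
  rw [← h1]
  refine (Fintype.sum_bijective (compCons l) (compCons_bijective l hl) _ _ ?_).symm
  rintro ⟨j, d⟩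
  congr 1
  simp only [compCons, List.splitWrtComposition, List.splitWrtCompositionAux_cons]

/-! ### The key partial fraction identity -/

lemma key (l : List ℕ) (hl : ∀ x ∈ l, 0 < x) :
    ∀ u : ℚ, 0 < u →
    ∑ j ∈ Finset.range (l.length + 1),
        (-1:ℚ)^j / (piuo u (l.take j) * piuo 0 ((l.drop j).reverse))
      = u / (piuo 0 l.reverse * (l.sum + u)) := by
  induction l with
  | nil =>
    intro u hu
    simp [div_self hu.ne']
  | cons y ys ih =>
    intro u hu
    have hy : 0 < y := hl y (by simp)
    have hys : ∀ x ∈ ys, 0 < x := fun x hx => hl x (by simp [hx])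
    have hyQ : (0:ℚ) < y := by exact_mod_cast hy
    have hsQ : (0:ℚ) ≤ ys.sum := by positivity
    have hP : 0 < piuo 0 ys.reverse :=
      piuo_pos le_rfl (fun x hx => hys x (List.mem_reverse.1 hx))
    rw [List.length_cons, Finset.sum_range_succ']
    have hterm : ∀ j ∈ Finset.range (ys.length + 1),
        (-1:ℚ)^(j+1) / (piuo u ((y::ys).take (j+1)) * piuo 0 (((y::ys).drop (j+1)).reverse))
          = (-(u+y)⁻¹) * ((-1:ℚ)^j / (piuo (u+y) (ys.take j) * piuo 0 ((ys.drop j).reverse))) := by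
      intro j _
      rw [List.take_succ_cons, List.drop_succ_cons, piuo_cons]
      have hupy : (0:ℚ) < u + y := by linarith
      have h2 : 0 < piuo (u+y) (ys.take j) :=
        piuo_pos hupy.le (fun x hx => hys x (List.mem_of_mem_take hx))
      have h3 : 0 < piuo 0 ((ys.drop j).reverse) :=
        piuo_pos le_rfl (fun x hx => hys x (List.mem_of_mem_drop (List.mem_reverse.1 hx)))
      rw [pow_succ]
      field_simp
    rw [Finset.sum_congr rfl hterm, ← Finset.mul_sum, ih hys (u+y) (by linarith)]
    have hrev : piuo 0 ((y::ys).reverse) = piuo 0 ys.reverse * (ys.sum + y) := by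
      rw [List.reverse_cons, piuo_concat, List.sum_reverse]
      ring_nf
    simp only [List.take_zero, List.drop_zero, piuo_nil, pow_zero, one_mul, hrev, List.sum_cons]
    have hc : ((y + ys.sum : ℕ) : ℚ) = (y:ℚ) + (ys.sum:ℚ) := by push_cast; ring
    rw [hc]
    have hupy : (0:ℚ) < u + y := by linarith
    have h4 : (0:ℚ) < (ys.sum:ℚ) + y := by linarith
    have h5 : (0:ℚ) < (ys.sum : ℚ) + (u + y) := by linarith
    set S := ((ys.sum : ℕ) : ℚ) with hS
    set P := piuo 0 ys.reverse with hPdef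
    field_simp
    ring

/-! ### Per-block sums -/

/-- Summand of `gsum`. -/
noncomputable def F0 (P : List (List ℕ)) : ℚ := (-1)^P.length / ((P.map piu).prod : ℚ)

/-- Summand of `fsum`, matching the summand shape of `midSum` for one block. -/
noncomputable def F1 (P : List (List ℕ)) : ℚ :=
  (-1)^P.length * (((P.map List.sum).headI : ℕ) : ℚ) / ((P.map piu).prod : ℚ)

noncomputable def gsum (l : List ℕ) : ℚ :=
  ∑ c : Composition l.length, F0 (l.splitWrtComposition c)

noncomputable def fsum (l : List ℕ) : ℚ :=
  ∑ c : Composition l.length, F1 (l.splitWrtComposition c)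

lemma F0_cons (A : List ℕ) (P : List (List ℕ)) : F0 (A :: P) = -((piu A : ℚ))⁻¹ * F0 P := by
  simp only [F0, List.length_cons, List.map_cons, List.prod_cons, pow_succ, Nat.cast_mul]
  rw [div_eq_mul_inv, div_eq_mul_inv, mul_inv]
  ring

lemma F1_cons (A : List ℕ) (P : List (List ℕ)) :
    F1 (A :: P) = -((A.sum : ℚ) * ((piu A : ℚ))⁻¹) * F0 P := by
  simp only [F1, F0, List.length_cons, List.map_cons, List.prod_cons, pow_succ, Nat.cast_mul,
    List.headI_cons]
  rw [div_eq_mul_inv, div_eq_mul_inv, mul_inv]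
  ring

lemma comp_zero_blocks (c : Composition 0) : c.blocks = [] := by
  rcases h : c.blocks with _ | ⟨b, t⟩
  · rfl
  · exfalso
    have h1 := c.blocks_sum
    rw [h] at h1
    have h2 : 0 < b := c.blocks_pos (by rw [h]; simp)
    simp at h1
    omega

lemma gsum_nil : gsum [] = 1 := by
  unfold gsum
  have h : ∀ c : Composition ([] : List ℕ).length, F0 (([] : List ℕ).splitWrtComposition c) = 1 := by
    intro c
    have : c.blocks = [] := comp_zero_blocks c
    simp [List.splitWrtComposition, this, List.splitWrtCompositionAux, F0]
  rw [Finset.sum_congr rfl (fun c _ => h c), Finset.sum_const, Finset.card_univ]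
  have hcard : Fintype.card (Composition ([] : List ℕ).length) = 1 := by
    rw [composition_card]
    simp
  rw [hcard]
  simp

lemma gsum_closed : ∀ (n : ℕ) (l : List ℕ), l.length ≤ n → (∀ x ∈ l, 0 < x) →
    gsum l = (-1)^l.length / piuo 0 l.reverse := by
  intro n
  induction n with
  | zero =>
    intro l hlen _
    have : l = [] := List.length_eq_zero_iff.1 (Nat.le_zero.1 hlen)
    subst this
    simpa using gsum_nil
  | succ n ihn =>
    intro l hlen hl
    match l with
    | [] => simpa using gsum_nil
    | x :: xs =>
      have hx : 0 < x := hl x (by simp)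
      have hxQ : (0:ℚ) < x := by exact_mod_cast hx
      have hxs : ∀ y ∈ xs, 0 < y := fun y hy => hl y (by simp [hy])
      have hm : xs.length ≤ n := by simpa using hlen
      unfold gsum
      rw [sum_comp_split (x :: xs) (by simp) F0]
      have hinner : ∀ j : Fin (x :: xs).length,
          ∑ d : Composition ((x :: xs).drop ((j:ℕ)+1)).length,
            F0 ((x :: xs).take ((j:ℕ)+1) :: ((x :: xs).drop ((j:ℕ)+1)).splitWrtComposition d)
          = -((piu ((x :: xs).take ((j:ℕ)+1)) : ℚ))⁻¹ * gsum ((x :: xs).drop ((j:ℕ)+1)) := by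
        intro j
        rw [gsum, Finset.mul_sum]
        exact Finset.sum_congr rfl (fun d _ => F0_cons _ _)
      rw [Finset.sum_congr rfl (fun j _ => hinner j)]
      have hval : ∀ j : Fin (x :: xs).length,
          -((piu ((x :: xs).take ((j:ℕ)+1)) : ℚ))⁻¹ * gsum ((x :: xs).drop ((j:ℕ)+1))
          = (-(x:ℚ)⁻¹ * (-1)^xs.length) *
            ((-1:ℚ)^(j:ℕ) / (piuo x (xs.take (j:ℕ)) * piuo 0 ((xs.drop (j:ℕ)).reverse))) := by
        intro j
        have hjlt : (j:ℕ) < xs.length + 1 := by simpa using j.isLt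
        have hdrop : (x :: xs).drop ((j:ℕ)+1) = xs.drop (j:ℕ) := List.drop_succ_cons ..
        have htake : (x :: xs).take ((j:ℕ)+1) = x :: xs.take (j:ℕ) := List.take_succ_cons ..
        rw [hdrop, htake, ihn (xs.drop (j:ℕ)) (le_trans (by rw [List.length_drop]; omega) hm)
          (fun y hy => hxs y (List.mem_of_mem_drop hy))]
        rw [piu_cast, piuo_cons, zero_add]
        rw [List.length_drop, neg_one_pow_sub (by omega)]
        have h2 : 0 < piuo (x:ℚ) (xs.take (j:ℕ)) :=
          piuo_pos hxQ.le (fun y hy => hxs y (List.mem_of_mem_take hy))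
        have h3 : 0 < piuo 0 ((xs.drop (j:ℕ)).reverse) :=
          piuo_pos le_rfl (fun y hy => hxs y (List.mem_of_mem_drop (List.mem_reverse.1 hy)))
        field_simp
      rw [Finset.sum_congr rfl (fun j _ => hval j), ← Finset.mul_sum]
      have hfin : ∑ j : Fin (x :: xs).length,
          ((-1:ℚ)^(j:ℕ) / (piuo x (xs.take (j:ℕ)) * piuo 0 ((xs.drop (j:ℕ)).reverse)))
          = ∑ j ∈ Finset.range (xs.length + 1),
            ((-1:ℚ)^j / (piuo x (xs.take j) * piuo 0 ((xs.drop j).reverse))) := by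
        rw [← Fin.sum_univ_eq_sum_range]
        rfl
      rw [hfin, key xs hxs (x:ℚ) hxQ]
      have hrev : piuo 0 ((x::xs).reverse) = piuo 0 xs.reverse * (xs.sum + x) := by
        rw [List.reverse_cons, piuo_concat, List.sum_reverse]
        ring_nf
      rw [hrev]
      have hP : 0 < piuo 0 xs.reverse :=
        piuo_pos le_rfl (fun y hy => hxs y (List.mem_reverse.1 hy))
      have hsQ : (0:ℚ) ≤ xs.sum := by positivity
      have h4 : (0:ℚ) < (xs.sum:ℚ) + x := by linarith
      rw [List.length_cons, pow_succ]
      set S := ((xs.sum : ℕ) : ℚ) with hSdef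
      set P := piuo 0 xs.reverse with hPdef
      field_simp

lemma fsum_eq (l : List ℕ) (hne : l ≠ []) (hl : ∀ x ∈ l, 0 < x) :
    fsum l = ∑ j ∈ Finset.range l.length,
      (-1:ℚ)^(l.length - j) *
        ((piuo 0 (l.take j))⁻¹ * (piuo 0 ((l.drop (j+1)).reverse))⁻¹) := by
  unfold fsum
  rw [sum_comp_split l hne F1]
  have hinner : ∀ j : Fin l.length,
      ∑ d : Composition (l.drop ((j:ℕ)+1)).length,
        F1 (l.take ((j:ℕ)+1) :: (l.drop ((j:ℕ)+1)).splitWrtComposition d)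
      = -(((l.take ((j:ℕ)+1)).sum : ℚ) * ((piu (l.take ((j:ℕ)+1)) : ℚ))⁻¹) *
          gsum (l.drop ((j:ℕ)+1)) := by
    intro j
    rw [gsum, Finset.mul_sum]
    exact Finset.sum_congr rfl (fun d _ => F1_cons _ _)
  rw [Finset.sum_congr rfl (fun j _ => hinner j)]
  rw [← Fin.sum_univ_eq_sum_range
    (fun j => (-1:ℚ)^(l.length - j) *
      ((piuo 0 (l.take j))⁻¹ * (piuo 0 ((l.drop (j+1)).reverse))⁻¹))]
  apply Finset.sum_congr rfl
  intro j _
  have hjlt : (j:ℕ) < l.length := j.isLt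
  rw [gsum_closed (l.drop ((j:ℕ)+1)).length _ le_rfl
    (fun y hy => hl y (List.mem_of_mem_drop hy))]
  have hsum_pos : 0 < (l.take ((j:ℕ)+1)).sum := by
    have h1 : l[(j:ℕ)] ∈ l := List.getElem_mem _
    have h2 := hl _ h1
    have h3 := List.sum_take_succ l (j:ℕ) hjlt
    omega
  have htp : piuo 0 (l.take ((j:ℕ)+1)) = piuo 0 (l.take (j:ℕ)) * ((l.take ((j:ℕ)+1)).sum : ℚ) := by
    rw [List.take_succ, List.getElem?_eq_getElem hjlt]
    simp only [Option.toList_some]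
    rw [piuo_concat]
    push_cast [List.sum_append]
    simp
  rw [piu_cast, htp, List.length_drop]
  have hA : 0 < piuo 0 (l.take (j:ℕ)) :=
    piuo_pos le_rfl (fun y hy => hl y (List.mem_of_mem_take hy))
  have hB : 0 < piuo 0 ((l.drop ((j:ℕ)+1)).reverse) :=
    piuo_pos le_rfl (fun y hy => hl y (List.mem_of_mem_drop (List.mem_reverse.1 hy)))
  have hSpos : (0:ℚ) < ((l.take ((j:ℕ)+1)).sum : ℚ) := by exact_mod_cast hsum_pos
  have hlen : l.length - (j:ℕ) = (l.length - ((j:ℕ)+1)) + 1 := by omega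
  rw [hlen, pow_succ]
  set S := (((l.take ((j:ℕ)+1)).sum : ℕ) : ℚ) with hSdef
  field_simp

lemma fsum_reverse (l : List ℕ) (hne : l ≠ []) (hl : ∀ x ∈ l, 0 < x) :
    fsum l.reverse = (-1:ℚ)^(l.length + 1) * fsum l := by
  have hner : l.reverse ≠ [] := by simpa using hne
  have hlr : ∀ x ∈ l.reverse, 0 < x := fun x hx => hl x (List.mem_reverse.1 hx)
  rw [fsum_eq l hne hl, fsum_eq l.reverse hner hlr]
  simp only [List.length_reverse]
  rw [Finset.mul_sum]
  rw [← Finset.sum_range_reflect (fun j => (-1:ℚ)^(l.length - j) *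
    ((piuo 0 (l.reverse.take j))⁻¹ * (piuo 0 ((l.reverse.drop (j+1)).reverse))⁻¹)) l.length]
  refine Finset.sum_congr rfl ?_
  intro j hj
  have hjlt : j < l.length := Finset.mem_range.1 hj
  have h1 : l.reverse.take (l.length - 1 - j) = (l.drop (j+1)).reverse := by
    rw [List.take_reverse]
    have h : l.length - (l.length - 1 - j) = j + 1 := by omega
    rw [h]
  have h2 : l.reverse.drop ((l.length - 1 - j) + 1) = (l.take j).reverse := by
    rw [List.drop_reverse]
    have h : l.length - (l.length - 1 - j + 1) = j := by omega
    rw [h]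
  have hidx : l.length - (l.length - 1 - j) = j + 1 := by omega
  rw [h1, h2, hidx, List.reverse_reverse]
  have hsign : ((-1:ℚ))^(l.length+1) * ((-1:ℚ))^(l.length - j) = (-1:ℚ)^(j+1) := by
    rw [neg_one_pow_sub (le_of_lt hjlt), ← mul_assoc, ← pow_add]
    have hodd : Odd (l.length + 1 + l.length) := ⟨l.length, by ring⟩
    rw [hodd.neg_one_pow, pow_succ]
    ring
  rw [← hsign]
  ring

lemma midSum_eq_prodList (L : List (List ℕ)) : midSum L = (L.map fsum).prod := by
  have h1 : midSum L = ∏ a : Fin L.length, fsum (L.get a) := by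
    unfold midSum fsum F1
    rw [Fintype.prod_sum]
    apply Finset.sum_congr rfl
    intro g _
    simp only [List.length_splitWrtComposition]
    rw [Finset.prod_div_distrib, Finset.prod_mul_distrib, Finset.prod_pow_eq_pow_sum]
  rw [h1]
  calc ∏ a : Fin L.length, fsum (L.get a)
      = (List.ofFn (fun a => fsum (L.get a))).prod := by rw [List.prod_ofFn]
    _ = (L.map fsum).prod := by
        rw [show (fun a => fsum (L.get a)) = fsum ∘ L.get from rfl, ← List.map_ofFn,
          List.ofFn_get]

lemma list_prod_neg_one_pow {α : Type*} (l : List α) (f : α → ℕ) :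
    (l.map fun x => (-1:ℚ)^(f x)).prod = (-1:ℚ)^((l.map f).sum) := by
  induction l with
  | nil => simp
  | cons x xs ih => simp [ih, pow_add]

lemma sum_map_length_add_one (L : List (List ℕ)) :
    (L.map fun B => B.length + 1).sum = (L.map List.length).sum + L.length := by
  induction L with
  | nil => simp
  | cons B Ls ih =>
    simp only [List.map_cons, List.sum_cons, List.length_cons, ih]
    omega

theorem stmt12 (L : List (List ℕ))
    (hblocks : ∀ B ∈ L, B ≠ []) (hpos : ∀ x ∈ L.flatten, 0 < x) :
    (-1 : ℚ) ^ L.flatten.length * midSum L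
      = (-1 : ℚ) ^ L.length * midSum ((L.map List.reverse).reverse) := by
  rw [midSum_eq_prodList, midSum_eq_prodList]
  have hmap : ((L.map List.reverse).reverse).map fsum
      = ((L.map (fun B => fsum B.reverse))).reverse := by
    rw [List.map_reverse, List.map_map]
    rfl
  rw [hmap, List.prod_reverse]
  have hpt : L.map (fun B => fsum B.reverse)
      = L.map (fun B => (-1:ℚ)^(B.length + 1) * fsum B) := by
    apply List.map_congr_left
    intro B hB
    exact fsum_reverse B (hblocks B hB) (fun x hx => hpos x (List.mem_flatten.2 ⟨B, hB, hx⟩))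
  rw [hpt, List.prod_map_mul, list_prod_neg_one_pow]
  have hexp : ((L.map fun B => B.length + 1).sum) = L.flatten.length + L.length := by
    rw [List.length_flatten]
    exact sum_map_length_add_one L
  rw [hexp]
  have hsign : ((-1:ℚ))^L.length * ((-1:ℚ))^(L.flatten.length + L.length)
      = ((-1:ℚ))^L.flatten.length := by
    rw [← pow_add, show L.length + (L.flatten.length + L.length) = L.flatten.length + 2 * L.length
      by omega, pow_add, pow_mul]
    norm_num
  rw [← mul_assoc, hsign]
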